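/- arXiv:2403.04597 — 2 statements merged into one kernel-verified Lean document; each statement's English description precedes it below -/
import Mathlib

section
/- Let V and W be F1-representations of a quiver Q, K a field, and C an admissible connected component of Γ_V ⊗ Γ_W. Then the K-linear map b^C : V^K → W^K defined on basis vectors by b^C(v) = Σ_{(v,w) ∈ C_0} w is a morphism of K-linear quiver representations, i.e., it commutes with the structure maps of V^K and W^K. -/
open scoped Classical

section

/- `Q` is a quiver with vertices `ι`, arrows `A` and source/target maps `s,t`.
`V` and `W` are `F1`-representations of `Q`, encoded by the families `BV i`,
`BW i` of nonzero elements of the pointed sets `V_i`, `W_i` and by the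
`Option`-valued structure maps (`none` standing for the zero element),
injective away from `none`. -/
variable {ι A : Type} (s t : A → ι) (BV BW : ι → Type)
  (Vmap : ∀ a : A, BV (s a) → Option (BV (t a)))
  (Wmap : ∀ a : A, BW (s a) → Option (BW (t a)))

/-- Vertices of the tensor product coefficient quiver `Γ_V ⊗ Γ_W`:
pairs of nonzero elements over the same vertex of `Q`. -/
def TVert : Type := Σ i : ι, BV i × BW i

/-- Undirected adjacency in `Γ_V ⊗ Γ_W`: there is an arrow
`(v,w) → (V_a v, W_a w)` for every arrow `a` of `Q` with both images
nonzero. -/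
def TAdj (x y : TVert BV BW) : Prop :=
  ∃ (a : A) (v : BV (s a)) (w : BW (s a)) (v' : BV (t a)) (w' : BW (t a)),
    Vmap a v = some v' ∧ Wmap a w = some w' ∧
    ((x = ⟨s a, (v, w)⟩ ∧ y = ⟨t a, (v', w')⟩) ∨
     (y = ⟨s a, (v, w)⟩ ∧ x = ⟨t a, (v', w')⟩))

/-- `C` is a connected component of `Γ_V ⊗ Γ_W`: nonempty, closed under
adjacency, and any two of its vertices are connected. -/
def IsComponent (C : Set (TVert BV BW)) : Prop :=
  C.Nonempty ∧
  (∀ x ∈ C, ∀ y, TAdj s t BV BW Vmap Wmap x y → y ∈ C) ∧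
  (∀ x ∈ C, ∀ y ∈ C, Relation.ReflTransGen (TAdj s t BV BW Vmap Wmap) x y)

/-- `C` reflects successors: for `(v,w) ∈ C` and an arrow `a` of `Q` with
`W_a w ≠ 0`, also `V_a v ≠ 0`. -/
def ReflectsSuccessors (C : Set (TVert BV BW)) : Prop :=
  ∀ (a : A) (v : BV (s a)) (w : BW (s a)),
    (⟨s a, (v, w)⟩ : TVert BV BW) ∈ C → Wmap a w ≠ none → Vmap a v ≠ none

/-- `C` induces predecessors: for `(v',w') ∈ C`, an arrow `a` of `Q` and `v`
with `V_a v = v'`, there exists `w` with `W_a w = w'`. -/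
def InducesPredecessors (C : Set (TVert BV BW)) : Prop :=
  ∀ (a : A) (v' : BV (t a)) (w' : BW (t a)),
    (⟨t a, (v', w')⟩ : TVert BV BW) ∈ C →
    ∀ v : BV (s a), Vmap a v = some v' → ∃ w : BW (s a), Wmap a w = some w'

/-- `C` is admissible if it reflects successors and induces predecessors. -/
def Admissible (C : Set (TVert BV BW)) : Prop :=
  ReflectsSuccessors s t BV BW Vmap Wmap C ∧
  InducesPredecessors s t BV BW Vmap Wmap C

variable (K : Type) [Field K] [∀ i, Fintype (BV i)] [∀ i, Fintype (BW i)]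

/-- The structure map of the scalar extension along an arrow `a`: the basis
vector `v` is sent to `w` if `Vmap a v = some w` and to `0` otherwise. -/
noncomputable def structK (a : A) : (BV (s a) → K) →ₗ[K] (BV (t a) → K) where
  toFun x w := ∑ v : BV (s a), (if Vmap a v = some w then (1 : K) else 0) * x v
  map_add' x y := by funext w; simp [mul_add, Finset.sum_add_distrib]
  map_smul' c x := by funext w; simp [Finset.mul_sum, mul_left_comm]

/-- The `K`-linear map `b^C : V^K → W^K` associated to a set `C` of vertices
of `Γ_V ⊗ Γ_W`: the basis vector `v` is sent to `Σ_{(v,w) ∈ C} w`. -/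
noncomputable def bC (C : Set (TVert BV BW)) (i : ι) :
    (BV i → K) →ₗ[K] (BW i → K) where
  toFun x w := ∑ v : BV i,
    (if (⟨i, (v, w)⟩ : TVert BV BW) ∈ C then (1 : K) else 0) * x v
  map_add' x y := by funext w; simp [mul_add, Finset.sum_add_distrib]
  map_smul' c x := by funext w; simp [Finset.mul_sum, mul_left_comm]

lemma sum_indicator_unique {α : Type} [Fintype α] (p : α → Prop)
    (huniq : ∀ a b, p a → p b → a = b) :
    (∑ a : α, (if p a then (1 : K) else 0)) = if ∃ a, p a then 1 else 0 := by
  by_cases h : ∃ a, p a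
  · obtain ⟨a0, ha0⟩ := h
    rw [if_pos ⟨a0, ha0⟩, Finset.sum_eq_single a0]
    · simp [ha0]
    · intro b _ hb; rw [if_neg]; exact fun hpb => hb (huniq b a0 hpb ha0)
    · simp
  · rw [if_neg h]
    exact Finset.sum_eq_zero fun a _ => if_neg fun hp => h ⟨a, hp⟩

/-- For an admissible connected component `C` of `Γ_V ⊗ Γ_W`, the map
`b^C : V^K → W^K` is a morphism of `K`-representations of `Q`: it commutes
with the structure maps of `V^K` and `W^K`. -/
theorem bC_is_morphism
    (Vinj : ∀ (a : A) (v v' : BV (s a)) (u : BV (t a)),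
      Vmap a v = some u → Vmap a v' = some u → v = v')
    (Winj : ∀ (a : A) (w w' : BW (s a)) (u : BW (t a)),
      Wmap a w = some u → Wmap a w' = some u → w = w')
    (C : Set (TVert BV BW))
    (hcomp : IsComponent s t BV BW Vmap Wmap C)
    (hadm : Admissible s t BV BW Vmap Wmap C) :
    ∀ a : A,
      (structK s t BW Wmap K a).comp (bC BV BW K C (s a)) =
      (bC BV BW K C (t a)).comp (structK s t BV Vmap K a) := by
  intro a
  apply LinearMap.ext
  intro x
  funext w'
  have key : ∀ v : BV (s a),
      (∃ w, Wmap a w = some w' ∧ (⟨s a, (v, w)⟩ : TVert BV BW) ∈ C) ↔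
      (∃ v', Vmap a v = some v' ∧ (⟨t a, (v', w')⟩ : TVert BV BW) ∈ C) := by
    intro v
    constructor
    · rintro ⟨w, hw, hc⟩
      have hne : Vmap a v ≠ none := hadm.1 a v w hc (by simp [hw])
      obtain ⟨v', hv'⟩ := Option.ne_none_iff_exists'.mp hne
      exact ⟨v', hv', hcomp.2.1 _ hc _ ⟨a, v, w, v', w', hv', hw,
        Or.inl ⟨rfl, rfl⟩⟩⟩
    · rintro ⟨v', hv', hc⟩
      obtain ⟨w, hw⟩ := hadm.2 a v' w' hc v hv'
      exact ⟨w, hw, hcomp.2.1 _ hc _ ⟨a, v, w, v', w', hv', hw,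
        Or.inr ⟨rfl, rfl⟩⟩⟩
  simp only [LinearMap.comp_apply, structK, bC, LinearMap.coe_mk, AddHom.coe_mk]
  simp only [Finset.mul_sum]
  rw [Finset.sum_comm]
  conv_rhs => rw [Finset.sum_comm]
  refine Finset.sum_congr rfl fun v _ => ?_
  have lhs_eq :
      (∑ w : BW (s a), (if Wmap a w = some w' then (1 : K) else 0) *
        ((if (⟨s a, (v, w)⟩ : TVert BV BW) ∈ C then (1 : K) else 0) * x v)) =
      (if ∃ w, Wmap a w = some w' ∧
        (⟨s a, (v, w)⟩ : TVert BV BW) ∈ C then (1 : K) else 0) * x v := by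
    by_cases hex : ∃ w, Wmap a w = some w' ∧ (⟨s a, (v, w)⟩ : TVert BV BW) ∈ C
    · obtain ⟨w0, hw0, hc0⟩ := hex
      rw [if_pos ⟨w0, hw0, hc0⟩, Finset.sum_eq_single w0]
      · simp [hw0, hc0]
      · intro b _ hb
        rcases eq_or_ne (Wmap a b) (some w') with h1 | h1
        · exact absurd (Winj a b w0 w' h1 hw0) hb
        · simp [h1]
      · simp
    · rw [if_neg hex, zero_mul]
      refine Finset.sum_eq_zero fun w _ => ?_
      rcases eq_or_ne (Wmap a w) (some w') with h1 | h1
      · rcases Classical.em ((⟨s a, (v, w)⟩ : TVert BV BW) ∈ C) with h2 | h2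
        · exact absurd ⟨w, h1, h2⟩ hex
        · simp [h2]
      · simp [h1]
  have rhs_eq :
      (∑ v' : BV (t a), (if (⟨t a, (v', w')⟩ : TVert BV BW) ∈ C then (1 : K)
        else 0) * ((if Vmap a v = some v' then (1 : K) else 0) * x v)) =
      (if ∃ v', Vmap a v = some v' ∧
        (⟨t a, (v', w')⟩ : TVert BV BW) ∈ C then (1 : K) else 0) * x v := by
    by_cases hex : ∃ v', Vmap a v = some v' ∧ (⟨t a, (v', w')⟩ : TVert BV BW) ∈ C
    · obtain ⟨v0, hv0, hc0⟩ := hex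
      rw [if_pos ⟨v0, hv0, hc0⟩, Finset.sum_eq_single v0]
      · simp [hv0, hc0]
      · intro b _ hb
        rcases eq_or_ne (Vmap a v) (some b) with h1 | h1
        · exact absurd (Option.some_injective _ (h1 ▸ hv0)) hb
        · simp [h1]
      · simp
    · rw [if_neg hex, zero_mul]
      refine Finset.sum_eq_zero fun v' _ => ?_
      rcases eq_or_ne (Vmap a v) (some v') with h1 | h1
      · rcases Classical.em ((⟨t a, (v', w')⟩ : TVert BV BW) ∈ C) with h2 | h2
        · exact absurd ⟨v', h1, h2⟩ hex
        · simp [h2]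
      · simp [h1]
  rw [lhs_eq, rhs_eq, if_congr (key v) rfl rfl]

end
end

section
/- Let V and W be F1-representations of a quiver Q, K a field, and let C be a connected component of Γ_V ⊗ Γ_W that is not admissible. Then for every morphism f : V^K → W^K of K-representations of Q and every vertex (v,w) of C, the coefficient f_{v,w} of w in f(v) is zero. -/
open scoped Classical

section

/- `Q` is a quiver with vertices `ι`, arrows `A` and source/target maps `s,t`.
`V` and `W` are `F1`-representations of `Q`, encoded by the families `BV i`,
`BW i` of nonzero elements of the pointed sets `V_i`, `W_i` and by the
`Option`-valued structure maps (`none` standing for the zero element),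
injective away from `none`. -/
variable {ι A : Type} (s t : A → ι) (BV BW : ι → Type)
  (Vmap : ∀ a : A, BV (s a) → Option (BV (t a)))
  (Wmap : ∀ a : A, BW (s a) → Option (BW (t a)))

variable (K : Type) [Field K] [∀ i, Fintype (BV i)] [∀ i, Fintype (BW i)]

/-- If `C` is a connected component of `Γ_V ⊗ Γ_W` that is not admissible,
then for every morphism `f : V^K → W^K` of `K`-representations and every
vertex `(v,w)` of `C`, the coefficient `f_{v,w}` of `w` in `f v` vanishes. -/
theorem coeff_zero_of_not_admissible
    [∀ i, DecidableEq (BV i)]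
    (Vinj : ∀ (a : A) (v v' : BV (s a)) (u : BV (t a)),
      Vmap a v = some u → Vmap a v' = some u → v = v')
    (Winj : ∀ (a : A) (w w' : BW (s a)) (u : BW (t a)),
      Wmap a w = some u → Wmap a w' = some u → w = w')
    (C : Set (TVert BV BW))
    (hcomp : IsComponent s t BV BW Vmap Wmap C)
    (hnadm : ¬ Admissible s t BV BW Vmap Wmap C)
    (f : ∀ i, (BV i → K) →ₗ[K] (BW i → K))
    (hf : ∀ a : A, (structK s t BW Wmap K a).comp (f (s a)) =
      (f (t a)).comp (structK s t BV Vmap K a)) :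
    ∀ (i : ι) (v : BV i) (w : BW i),
      (⟨i, (v, w)⟩ : TVert BV BW) ∈ C → f i (Pi.single v 1) w = 0 := by
  classical
  -- the coefficient function
  set c : TVert BV BW → K := fun x => f x.1 (Pi.single x.2.1 1) x.2.2 with hcdef
  -- structK on a basis vector of V
  have hsv : ∀ (a : A) (v : BV (s a)),
      structK s t BV Vmap K a (Pi.single v 1)
        = fun u => if Vmap a v = some u then (1 : K) else 0 := by
    intro a v
    funext u
    simp only [structK, LinearMap.coe_mk, AddHom.coe_mk]
    rw [Finset.sum_eq_single v]
    · simp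
    · intro b _ hb
      simp [Pi.single_eq_of_ne hb]
    · simp
  -- the key pointwise identity from intertwining
  have key : ∀ (a : A) (v : BV (s a)) (w' : BW (t a)),
      (∑ w : BW (s a),
        (if Wmap a w = some w' then (1 : K) else 0) * f (s a) (Pi.single v 1) w)
      = f (t a) (fun u => if Vmap a v = some u then (1 : K) else 0) w' := by
    intro a v w'
    have h := congrFun (LinearMap.congr_fun (hf a) (Pi.single v 1)) w'
    simp only [LinearMap.comp_apply] at h
    rw [hsv] at h
    exact h
  -- LHS of key when there is a preimage w of w'
  have lhs_eq : ∀ (a : A) (v : BV (s a)) (w : BW (s a)) (w' : BW (t a)),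
      Wmap a w = some w' →
      (∑ w₂ : BW (s a),
        (if Wmap a w₂ = some w' then (1 : K) else 0) * f (s a) (Pi.single v 1) w₂)
      = f (s a) (Pi.single v 1) w := by
    intro a v w w' hw
    rw [Finset.sum_eq_single w]
    · simp [hw]
    · intro b _ hb
      by_cases hbw : Wmap a b = some w'
      · exact absurd (Winj a b w w' hbw hw) hb
      · simp [hbw]
    · simp
  -- indicator function equals a basis vector when Vmap a v = some v'
  have ind_eq : ∀ (a : A) (v : BV (s a)) (v' : BV (t a)),
      Vmap a v = some v' →
      (fun u => if Vmap a v = some u then (1 : K) else 0) = Pi.single v' 1 := by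
    intro a v v' hv
    funext u
    rw [hv]
    by_cases hu : u = v'
    · subst hu; simp
    · rw [Pi.single_eq_of_ne hu, if_neg (fun h => hu (Option.some_inj.mp h).symm)]
  -- c is constant along adjacency
  have step : ∀ x y, TAdj s t BV BW Vmap Wmap x y → c x = c y := by
    intro x y ⟨a, v, w, v', w', hv, hw, hcase⟩
    have main : c ⟨s a, (v, w)⟩ = c ⟨t a, (v', w')⟩ := by
      have h := key a v w'
      rw [lhs_eq a v w w' hw, ind_eq a v v' hv] at h
      exact h
    rcases hcase with ⟨hx, hy⟩ | ⟨hy, hx⟩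
    · rw [hx, hy]; exact main
    · rw [hx, hy]; exact main.symm
  -- c is constant on connected vertices
  have const : ∀ x y, Relation.ReflTransGen (TAdj s t BV BW Vmap Wmap) x y →
      c x = c y := by
    intro x y h
    induction h with
    | refl => rfl
    | tail _ h2 ih => rw [ih, step _ _ h2]
  -- from non-admissibility, find a vertex in C with zero coefficient
  have hvanish : ∃ x₀ ∈ C, c x₀ = 0 := by
    rcases not_and_or.mp hnadm with h1 | h2
    · -- reflects successors fails
      unfold ReflectsSuccessors at h1
      push_neg at h1
      obtain ⟨a, v, w, hmem, hWne, hVnone⟩ := h1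
      obtain ⟨w', hw'⟩ := Option.ne_none_iff_exists'.mp hWne
      refine ⟨⟨s a, (v, w)⟩, hmem, ?_⟩
      have h := key a v w'
      rw [lhs_eq a v w w' hw'] at h
      have hz : (fun u => if Vmap a v = some u then (1 : K) else 0)
          = (0 : BV (t a) → K) := by
        funext u; simp [hVnone]
      rw [hz, map_zero] at h
      exact h.trans rfl
    · -- induces predecessors fails
      unfold InducesPredecessors at h2
      push_neg at h2
      obtain ⟨a, v', w', hmem, v, hv, hno⟩ := h2
      refine ⟨⟨t a, (v', w')⟩, hmem, ?_⟩
      have h := key a v w'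
      rw [ind_eq a v v' hv] at h
      have hz : (∑ w₂ : BW (s a),
          (if Wmap a w₂ = some w' then (1 : K) else 0) * f (s a) (Pi.single v 1) w₂)
          = 0 := by
        apply Finset.sum_eq_zero
        intro b _
        simp [hno b]
      rw [hz] at h
      exact h.symm
  -- conclude
  intro i v w hmem
  obtain ⟨x₀, hx₀, hzero⟩ := hvanish
  have := const x₀ ⟨i, (v, w)⟩ (hcomp.2.2 x₀ hx₀ ⟨i, (v, w)⟩ hmem)
  exact this.symm.trans hzero

end
end
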